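/- Let η > 0, let x₀ ∈ ℝ², and let A be a finite set of n ≥ 2 points in ℝ² such that every p ∈ A satisfies ‖p − x₀‖ ≥ η/2. Then there exists a unit vector u ∈ ℝ² such that every point p ∈ A is at distance at least η/n² from the ray {x₀ + t·u : t ≥ 0}, i.e. inf_{t ≥ 0} ‖p − (x₀ + t·u)‖ ≥ η/n² for all p ∈ A. -/

import Mathlib

noncomputable section

/-- The Euclidean plane. -/
abbrev Plane := EuclideanSpace ℝ (Fin 2)

open Real MeasureTheory Set
open scoped RealInnerProductSpace

lemma sin_small_near_multiple {ψ s : ℝ} (hs2 : s ≤ 1/2) (h : |Real.sin ψ| < s) :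
    ∃ k : ℤ, |ψ - k * π| < 5/4 * s := by
  have hs0 : 0 < s := lt_of_le_of_lt (abs_nonneg _) h
  refine ⟨round (ψ/π), ?_⟩
  set k := round (ψ/π) with hk
  set x := ψ - k * π with hx
  have hπ : (0:ℝ) < π := Real.pi_pos
  have hxb : |x| ≤ π/2 := by
    have h1 : |ψ/π - k| ≤ 1/2 := abs_sub_round (ψ/π)
    have hxe : x = (ψ/π - k) * π := by rw [hx]; field_simp
    rw [hxe, abs_mul, abs_of_pos hπ]
    nlinarith [abs_nonneg (ψ/π - (k:ℝ))]
  have hsψ : Real.sin ψ = (-1)^k * Real.sin x := by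
    have h2 := Real.sin_add_int_mul_pi x k
    rw [hx] at h2
    rw [show ψ - (k:ℝ) * π + (k:ℝ) * π = ψ by ring] at h2
    rw [h2, hx]
  have hsinx : |Real.sin x| = |Real.sin ψ| := by
    rw [hsψ, abs_mul]
    rcases Int.even_or_odd k with he | ho
    · rw [he.neg_one_zpow]; simp
    · rw [Odd.neg_one_zpow ho]; simp
  have hsinx' : |Real.sin x| < s := by rw [hsinx]; exact h
  have habs : Real.sin |x| = |Real.sin x| := by
    rcases abs_cases x with ⟨h1, h2⟩ | ⟨h1, h2⟩
    · rw [h1, abs_of_nonneg]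
      exact Real.sin_nonneg_of_nonneg_of_le_pi h2 (by linarith [le_abs_self x, hxb])
    · have hneg : Real.sin x ≤ 0 := by
        rw [← Left.nonneg_neg_iff, ← Real.sin_neg]
        exact Real.sin_nonneg_of_nonneg_of_le_pi (by linarith)
          (by linarith [neg_le_abs x, hxb])
      rw [h1, Real.sin_neg, abs_of_nonpos hneg]
  have hx6 : |x| < π/6 := by
    by_contra hcon
    push_neg at hcon
    have hle : Real.sin (π/6) ≤ Real.sin |x| := by
      rcases eq_or_lt_of_le hcon with heq | hlt
      · rw [heq]
      · exact le_of_lt (Real.strictMonoOn_sin ⟨by linarith, by linarith⟩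
          ⟨by linarith [abs_nonneg x], by linarith⟩ hlt)
    rw [Real.sin_pi_div_six, habs] at hle
    linarith
  rcases eq_or_lt_of_le (abs_nonneg x) with h0 | h0
  · rw [← h0]; positivity
  · have h1 : |x| ≤ 1 := by nlinarith [Real.pi_lt_d2]
    have h2 : |x| - |x|^3/4 < Real.sin |x| := by
      have h := Real.sin_gt_sub_cube h0
      linarith [pow_nonneg (abs_nonneg x) 3]
    have hxlt : |x| < 0.53 := by nlinarith [Real.pi_lt_d2]
    have h3 : (4:ℝ)/5 * |x| ≤ |x| - |x|^3/4 := by nlinarith [abs_nonneg x, mul_nonneg (abs_nonneg x) (abs_nonneg x), sq_nonneg (|x| - 0.53), sq_nonneg |x|]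
    rw [habs] at h2
    linarith


/-- coordinates to Plane -/
def mk2 (a b : ℝ) : Plane := (WithLp.equiv 2 (Fin 2 → ℝ)).symm ![a, b]

lemma mk2_apply0 (a b : ℝ) : mk2 a b 0 = a := rfl
lemma mk2_apply1 (a b : ℝ) : mk2 a b 1 = b := rfl

lemma inner_mk2 (q : Plane) (a b : ℝ) : ⟪q, mk2 a b⟫ = q 0 * a + q 1 * b := by
  rw [PiLp.inner_apply, Fin.sum_univ_two]
  simp [mk2_apply0, mk2_apply1, RCLike.inner_apply, mul_comm]

lemma norm_mk2 (a b : ℝ) : ‖mk2 a b‖ = Real.sqrt (a^2 + b^2) := by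
  rw [EuclideanSpace.norm_eq, Fin.sum_univ_two, mk2_apply0, mk2_apply1]
  simp [sq_abs]

/-- existence of a good ray. If every point of a finite set `A` of
`n ≥ 2` points is at distance at least `η/2` from `x₀`, then there is a ray from
`x₀` staying at distance at least `η/n²` from every point of `A`. -/
theorem exists_good_ray
    (η : ℝ) (hη : 0 < η) (x₀ : Plane)
    (A : Set Plane) (hA : A.Finite) (hn : 2 ≤ A.ncard)
    (hfar : ∀ p ∈ A, dist p x₀ ≥ η / 2) :
    ∃ u : Plane, ‖u‖ = 1 ∧
      ∀ p ∈ A, ∀ t : ℝ, 0 ≤ t →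
        dist p (x₀ + t • u) ≥ η / (A.ncard : ℝ) ^ 2 := by
  have hπ := Real.pi_pos
  set n := A.ncard with hncard
  have hn2 : (2:ℝ) ≤ n := by exact_mod_cast hn
  have hnpos : (0:ℝ) < n := by linarith
  set c := η / (n:ℝ)^2 with hc
  have hcpos : 0 < c := by positivity
  set w : ℝ → Plane := fun θ => mk2 (-Real.sin θ) (Real.cos θ) with hw
  set φ : Plane → ℝ := fun p => Complex.arg (((p - x₀) 0 : ℂ) + ((p - x₀) 1 : ℂ) * Complex.I)
    with hφ
  set δ : Plane → ℝ := fun p => 5/4 * (c / dist p x₀) with hδ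
  -- inner product formula
  have hinner : ∀ p ∈ A, ∀ θ : ℝ,
      ⟪p - x₀, w θ⟫ = dist p x₀ * Real.sin (φ p - θ) := by
    intro p hp θ
    set q := p - x₀ with hq
    set z : ℂ := ((q 0 : ℂ) + (q 1 : ℂ) * Complex.I) with hz
    have hr : dist p x₀ = ‖q‖ := dist_eq_norm p x₀
    have hrpos : 0 < ‖q‖ := by
      rw [← hr]; linarith [hfar p hp]
    have habs : ‖z‖ = ‖q‖ := by
      rw [hz, Complex.norm_add_mul_I, EuclideanSpace.norm_eq, Fin.sum_univ_two]
      simp [sq_abs]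
    have hz0 : z ≠ 0 := by
      intro h0
      rw [h0] at habs
      simp at habs
      linarith [habs ▸ hrpos]
    have hcos : Real.cos (φ p) = q 0 / ‖q‖ := by
      have := Complex.cos_arg hz0
      rw [habs] at this
      simpa [hφ, hz, hq] using this
    have hsin : Real.sin (φ p) = q 1 / ‖q‖ := by
      have := Complex.sin_arg z
      rw [habs] at this
      simpa [hφ, hz, hq] using this
    have h0 : q 0 = ‖q‖ * Real.cos (φ p) := by rw [hcos]; field_simp
    have h1 : q 1 = ‖q‖ * Real.sin (φ p) := by rw [hsin]; field_simp
    rw [hw, inner_mk2, h0, h1, hr, Real.sin_sub]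
    ring
  -- bad set containment
  set K : Finset ℤ := Finset.Icc (-15 : ℤ) 1 with hK
  set C : Plane → Set ℝ := fun p =>
    ⋃ k ∈ K, Set.Ioo (φ p - k*π - δ p) (φ p - k*π + δ p) with hC
  have hsub : ∀ p ∈ A, ∀ θ ∈ Set.Ico (0:ℝ) (14*π),
      |⟪p - x₀, w θ⟫| < c → θ ∈ C p := by
    intro p hp θ hθ hbad
    have hr : dist p x₀ ≥ η/2 := hfar p hp
    have hrpos : 0 < dist p x₀ := by linarith
    set s := c / dist p x₀ with hs
    have hs2 : s ≤ 1/2 := by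
      have hceq : c * (n:ℝ)^2 = η := by rw [hc]; field_simp
      rw [hs, div_le_iff₀ hrpos]
      nlinarith [mul_nonneg (le_of_lt hcpos) (show (0:ℝ) ≤ (n:ℝ)^2 - 4 by nlinarith)]
    have hsin : |Real.sin (φ p - θ)| < s := by
      rw [hinner p hp θ, abs_mul, abs_of_pos hrpos] at hbad
      rw [hs, lt_div_iff₀ hrpos, mul_comm]
      exact hbad
    obtain ⟨k, hk⟩ := sin_small_near_multiple hs2 hsin
    have hδval : 5/4 * s = δ p := by rw [hδ, hs]
    rw [hδval] at hk
    have hδb : δ p ≤ 5/8 := by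
      rw [hδ]
      have : c / dist p x₀ ≤ 1/2 := hs2
      linarith
    have hφb1 : -π < φ p := Complex.neg_pi_lt_arg _
    have hφb2 : φ p ≤ π := Complex.arg_le_pi _
    have hkmem : k ∈ K := by
      rw [hK, Finset.mem_Icc]
      have h1 : |φ p - θ - k*π| < 5/8 := lt_of_lt_of_le hk hδb
      rw [abs_lt] at h1
      have hθ1 : 0 ≤ θ := hθ.1
      have hθ2 : θ < 14*π := hθ.2
      constructor
      · by_contra hcon
        push_neg at hcon
        have h16 : k ≤ -16 := by omega
        have hkr : (k:ℝ) ≤ -16 := by exact_mod_cast h16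
        have hkpi : (k:ℝ) * π ≤ -16 * π := mul_le_mul_of_nonneg_right hkr (le_of_lt hπ)
        linarith [h1.2, Real.pi_gt_three]
      · by_contra hcon
        push_neg at hcon
        have h2k : 2 ≤ k := by omega
        have hkr : (2:ℝ) ≤ (k:ℝ) := by exact_mod_cast h2k
        have hkpi : (2:ℝ) * π ≤ (k:ℝ) * π := mul_le_mul_of_nonneg_right hkr (le_of_lt hπ)
        linarith [h1.1, Real.pi_gt_three]
    rw [hC]
    refine Set.mem_biUnion hkmem ?_
    rw [abs_lt] at hk
    constructor <;> [linarith [hk.1, hk.2]; linarith [hk.1, hk.2]]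
  -- measure bound
  set B : Set ℝ := ⋃ p ∈ hA.toFinset, C p with hB
  have hCvol : ∀ p ∈ A, volume (C p) ≤ ENNReal.ofReal (85 / (n:ℝ)^2) := by
    intro p hp
    have hr : dist p x₀ ≥ η/2 := hfar p hp
    have hrpos : 0 < dist p x₀ := by linarith
    have hδb : 2 * δ p ≤ 5 / (n:ℝ)^2 := by
      have h1 : c / dist p x₀ ≤ 2 / (n:ℝ)^2 := by
        rw [div_le_div_iff₀ hrpos (by positivity : (0:ℝ) < (n:ℝ)^2)]
        have hceq : c * (n:ℝ)^2 = η := by rw [hc]; field_simp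
        linarith
      have hδp : δ p = 5/4 * (c / dist p x₀) := rfl
      calc 2 * δ p = 5/2 * (c / dist p x₀) := by rw [hδp]; ring
      _ ≤ 5/2 * (2 / (n:ℝ)^2) := by linarith
      _ = 5 / (n:ℝ)^2 := by ring
    calc volume (C p) ≤ ∑ k ∈ K, volume (Set.Ioo (φ p - k*π - δ p) (φ p - k*π + δ p)) :=
          measure_biUnion_finset_le K _
    _ = ∑ k ∈ K, ENNReal.ofReal (2 * δ p) := by
        apply Finset.sum_congr rfl
        intro k _
        rw [Real.volume_Ioo]
        congr 1
        ring
    _ ≤ ∑ k ∈ K, ENNReal.ofReal (5 / (n:ℝ)^2) := by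
        apply Finset.sum_le_sum
        intro k _
        exact ENNReal.ofReal_le_ofReal hδb
    _ = 17 * ENNReal.ofReal (5 / (n:ℝ)^2) := by
        rw [Finset.sum_const, hK, nsmul_eq_mul]
        norm_cast
    _ ≤ ENNReal.ofReal (85 / (n:ℝ)^2) := by
        rw [show (85:ℝ) / (n:ℝ)^2 = 17 * (5 / (n:ℝ)^2) by ring,
          ENNReal.ofReal_mul (by norm_num)]
        norm_num
  have hBvol : volume B < volume (Set.Ico (0:ℝ) (14*π)) := by
    rw [Real.volume_Ico]
    calc volume B ≤ ∑ p ∈ hA.toFinset, volume (C p) := measure_biUnion_finset_le _ _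
    _ ≤ ∑ p ∈ hA.toFinset, ENNReal.ofReal (85 / (n:ℝ)^2) := by
        apply Finset.sum_le_sum
        intro p hp
        exact hCvol p (hA.mem_toFinset.mp hp)
    _ = n * ENNReal.ofReal (85 / (n:ℝ)^2) := by
        rw [Finset.sum_const, nsmul_eq_mul]
        congr 1
        rw [hncard]
        exact_mod_cast congrArg Nat.cast (Set.ncard_eq_toFinset_card A hA).symm
    _ = ENNReal.ofReal (85 / (n:ℝ)) := by
        rw [show ((n:ℕ):ENNReal) = ENNReal.ofReal (n:ℝ) by
          rw [ENNReal.ofReal_natCast]]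
        rw [← ENNReal.ofReal_mul (by positivity)]
        congr 1
        field_simp
    _ < ENNReal.ofReal (14*π - 0) := by
        rw [ENNReal.ofReal_lt_ofReal_iff (by linarith [Real.pi_gt_three] : (0:ℝ) < 14*π - 0)]
        have h425 : 85 / (n:ℝ) ≤ 42.5 := by
          rw [div_le_iff₀ hnpos]; linarith
        linarith [Real.pi_gt_d6]
  -- pick good angle
  have hne : (Set.Ico (0:ℝ) (14*π) \ B).Nonempty := by
    by_contra hcon
    rw [Set.not_nonempty_iff_eq_empty, Set.diff_eq_empty] at hcon
    exact absurd (measure_mono hcon) (not_le.mpr hBvol)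
  obtain ⟨θ, hθI, hθB⟩ := hne
  refine ⟨mk2 (Real.cos θ) (Real.sin θ), ?_, ?_⟩
  · rw [norm_mk2]
    rw [show Real.cos θ^2 + Real.sin θ^2 = 1 by rw [add_comm]; exact Real.sin_sq_add_cos_sq θ]
    exact Real.sqrt_one
  · intro p hp t ht
    have hgood : |⟪p - x₀, w θ⟫| ≥ c := by
      by_contra hcon
      push_neg at hcon
      exact hθB (Set.mem_biUnion (hA.mem_toFinset.mpr hp) (hsub p hp θ hθI hcon))
    have hworth : ‖w θ‖ = 1 := by
      rw [hw]
      simp only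
      rw [norm_mk2, show (-Real.sin θ)^2 + Real.cos θ^2 = 1 by
        rw [neg_pow]; simp [Real.sin_sq_add_cos_sq]]
      exact Real.sqrt_one
    have hperp : ⟪mk2 (Real.cos θ) (Real.sin θ), w θ⟫ = 0 := by
      rw [hw]
      simp only
      rw [inner_mk2, mk2_apply0, mk2_apply1]
      ring
    have hkey : ⟪p - (x₀ + t • mk2 (Real.cos θ) (Real.sin θ)), w θ⟫ = ⟪p - x₀, w θ⟫ := by
      rw [show p - (x₀ + t • mk2 (Real.cos θ) (Real.sin θ))
          = (p - x₀) - t • mk2 (Real.cos θ) (Real.sin θ) by abel]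
      rw [inner_sub_left, inner_smul_left]
      simp [hperp]
    calc dist p (x₀ + t • mk2 (Real.cos θ) (Real.sin θ))
        = ‖p - (x₀ + t • mk2 (Real.cos θ) (Real.sin θ))‖ := dist_eq_norm _ _
    _ ≥ |⟪p - (x₀ + t • mk2 (Real.cos θ) (Real.sin θ)), w θ⟫| := by
        calc |⟪p - (x₀ + t • mk2 (Real.cos θ) (Real.sin θ)), w θ⟫|
            ≤ ‖p - (x₀ + t • mk2 (Real.cos θ) (Real.sin θ))‖ * ‖w θ‖ := abs_real_inner_le_norm _ _
        _ = ‖p - (x₀ + t • mk2 (Real.cos θ) (Real.sin θ))‖ := by rw [hworth, mul_one]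
    _ = |⟪p - x₀, w θ⟫| := by rw [hkey]
    _ ≥ c := hgood

end
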